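/- Let β > 2, a > 0, z ≥ 0 and u ≥ 0. Then ∫_u^∞ e^{−a(φ_β(z)−1)s^{2/β}} · (2a/β) s^{2/β − 1} e^{−a s^{2/β}} ds = (1/φ_β(z)) · e^{−a u^{2/β} φ_β(z)}, where φ_β(z) = e^{−z} + z^{2/β} γ(1 − 2/β, z). (This is the joint transform E[1{L ≥ u} e^{−zf}] of the path-loss factor L and the interference factor f in the infinite Poisson model with a = λπE[S^{2/β}]/K².) -/

import Mathlib

open MeasureTheory Real

/-- The lower incomplete gamma function `γ(α, z) = ∫_0^z t^(α-1) e^{-t} dt`. -/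
noncomputable def lowerIncGamma (α z : ℝ) : ℝ :=
  ∫ t in Set.Ioo (0:ℝ) z, t ^ (α - 1) * Real.exp (-t)

/-- `φ_β(z) = e^{-z} + z^{2/β} γ(1 - 2/β, z)`. -/
noncomputable def phiBeta (β z : ℝ) : ℝ :=
  Real.exp (-z) + z ^ (2 / β) * lowerIncGamma (1 - 2 / β) z

theorem stmt_11 (β a z u : ℝ) (hβ : 2 < β) (ha : 0 < a) (hz : 0 ≤ z) (hu : 0 ≤ u) :
    ∫ s in Set.Ioi u,
        Real.exp (-a * (phiBeta β z - 1) * s ^ (2 / β)) *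
          ((2 * a / β) * s ^ (2 / β - 1) * Real.exp (-a * s ^ (2 / β)))
      = (1 / phiBeta β z) * Real.exp (-a * u ^ (2 / β) * phiBeta β z) := by
  have hβ0 : (0:ℝ) < β := lt_trans two_pos hβ
  set c := 2 / β with hc_def
  have hc : 0 < c := div_pos two_pos hβ0
  set φ := phiBeta β z with hφ_def
  have hφ : 0 < φ := by
    have h1 : 0 ≤ lowerIncGamma (1 - 2 / β) z := by
      apply MeasureTheory.setIntegral_nonneg measurableSet_Ioo
      intro t ht
      exact mul_nonneg (Real.rpow_nonneg ht.1.le _) (Real.exp_pos _).le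
    have h2 : 0 < Real.exp (-z) := Real.exp_pos _
    have h3 : 0 ≤ z ^ (2 / β) * lowerIncGamma (1 - 2 / β) z :=
      mul_nonneg (Real.rpow_nonneg hz _) h1
    have : φ = Real.exp (-z) + z ^ (2 / β) * lowerIncGamma (1 - 2 / β) z := rfl
    linarith [this]
  have haφ : 0 < a * φ := mul_pos ha hφ
  have hrw : ∀ s : ℝ,
      Real.exp (-a * (φ - 1) * s ^ c) *
        ((2 * a / β) * s ^ (c - 1) * Real.exp (-a * s ^ c))
      = a * c * s ^ (c - 1) * Real.exp (-(a * φ) * s ^ c) := by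
    intro s
    have h1 : Real.exp (-a * (φ - 1) * s ^ c) * Real.exp (-a * s ^ c)
        = Real.exp (-(a * φ) * s ^ c) := by
      rw [← Real.exp_add]; congr 1; ring
    have h2 : (2 * a / β : ℝ) = a * c := by rw [hc_def]; field_simp
    calc Real.exp (-a * (φ - 1) * s ^ c) *
          ((2 * a / β) * s ^ (c - 1) * Real.exp (-a * s ^ c))
        = (2 * a / β) * s ^ (c - 1) *
          (Real.exp (-a * (φ - 1) * s ^ c) * Real.exp (-a * s ^ c)) := by ring
      _ = a * c * s ^ (c - 1) * Real.exp (-(a * φ) * s ^ c) := by rw [h1, h2]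
  rw [setIntegral_congr_fun measurableSet_Ioi (fun s _ => hrw s)]
  have hcont : ContinuousWithinAt
      (fun x : ℝ => -(1 / φ) * Real.exp (-(a * φ) * x ^ c)) (Set.Ici u) u := by
    apply ContinuousAt.continuousWithinAt
    have h1 : ContinuousAt (fun x : ℝ => x ^ c) u :=
      Real.continuousAt_rpow_const u c (Or.inr hc.le)
    exact (((h1.const_mul (-(a * φ))).rexp).const_mul (-(1 / φ)))
  have hderiv : ∀ s ∈ Set.Ioi u, HasDerivAt
      (fun x : ℝ => -(1 / φ) * Real.exp (-(a * φ) * x ^ c))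
      (a * c * s ^ (c - 1) * Real.exp (-(a * φ) * s ^ c)) s := by
    intro s hs
    have hs0 : s ≠ 0 := ne_of_gt (lt_of_le_of_lt hu hs)
    have h1 : HasDerivAt (fun x : ℝ => x ^ c) (c * s ^ (c - 1)) s :=
      Real.hasDerivAt_rpow_const (Or.inl hs0)
    have h2 : HasDerivAt (fun x : ℝ => -(a * φ) * x ^ c)
        (-(a * φ) * (c * s ^ (c - 1))) s := h1.const_mul _
    have h3 := (h2.exp).const_mul (-(1 / φ))
    refine h3.congr_deriv ?_
    have hφ1 : φ * (1 / φ) = 1 := mul_one_div_cancel hφ.ne'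
    linear_combination hφ1 * (a * c * s ^ (c - 1) * Real.exp (-(a * φ) * s ^ c))
  have hnonneg : ∀ s ∈ Set.Ioi u,
      0 ≤ a * c * s ^ (c - 1) * Real.exp (-(a * φ) * s ^ c) := by
    intro s hs
    have hs0 : (0:ℝ) < s := lt_of_le_of_lt hu hs
    positivity
  have htend : Filter.Tendsto (fun x : ℝ => -(1 / φ) * Real.exp (-(a * φ) * x ^ c))
      Filter.atTop (nhds 0) := by
    have h1 : Filter.Tendsto (fun x : ℝ => (a * φ) * x ^ c) Filter.atTop Filter.atTop :=
      (tendsto_rpow_atTop hc).const_mul_atTop haφ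
    have h2 : Filter.Tendsto (fun x : ℝ => -(a * φ) * x ^ c) Filter.atTop Filter.atBot := by
      have := Filter.tendsto_neg_atTop_atBot.comp h1
      simpa [Function.comp_def, neg_mul] using this
    have h3 : Filter.Tendsto (fun x : ℝ => Real.exp (-(a * φ) * x ^ c))
        Filter.atTop (nhds 0) := Real.tendsto_exp_atBot.comp h2
    simpa using h3.const_mul (-(1 / φ))
  have := integral_Ioi_of_hasDerivAt_of_nonneg hcont hderiv hnonneg htend
  rw [this]
  have : -(a * φ) * u ^ c = -a * u ^ c * φ := by ring
  rw [this]
  ring
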